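/- Let A be a simple, unital, infinite-dimensional C*-algebra, m ≥ 1, and φ̄, ψ̄ ∈ P_m(A). Let 𝔊 be a filter on E_{A°}(φ̄,ψ̄) such that for all finite F, G ⊆ A° and all ε > 0, δ > 0 there is p ∈ 𝔊 with F ⊆ F_p, G ⊆ G_p, ε_p ≤ ε, and δ_p ≤ δ. Then: (i) for every a ∈ A the limits Φ_L(a) := lim_{p∈𝔊} v_p a v_p* and Φ_R(a) := lim_{p∈𝔊} w_p a w_p* exist in norm; (ii) Φ_L and Φ_R are *-automorphisms of A, with Φ_L^{-1}(a) = lim_{p∈𝔊} v_p* a v_p and Φ_R^{-1}(a) = lim_{p∈𝔊} w_p* a w_p; (iii) the automorphism Φ_𝔊 := Φ_L ∘ Φ_R^{-1} is approximately inner; and (iv) φ_i ∘ Φ_𝔊 = ψ_i for every i < m. -/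

import Mathlib

open scoped ComplexOrder

noncomputable section

variable {A : Type*} [NormedRing A] [StarRing A] [CStarRing A]
  [NormedAlgebra ℂ A] [StarModule ℂ A] [CompleteSpace A]

def IsState (φ : A →L[ℂ] ℂ) : Prop :=
  φ 1 = 1 ∧ ∀ a : A, 0 ≤ φ (star a * a)

def IsPureState (φ : A →L[ℂ] ℂ) : Prop :=
  IsState φ ∧ ∀ ψ₁ ψ₂ : A →L[ℂ] ℂ, IsState ψ₁ → IsState ψ₂ →
    ∀ t : ℝ, 0 < t → t < 1 →
      φ = (t : ℂ) • ψ₁ + ((1 - t : ℝ) : ℂ) • ψ₂ → ψ₁ = φ ∧ ψ₂ = φ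

def AdL (u : A) : A →L[ℂ] A :=
  (ContinuousLinearMap.mul ℂ A u).comp ((ContinuousLinearMap.mul ℂ A).flip (star u))

def UEquiv (φ ψ : A →L[ℂ] ℂ) : Prop :=
  ∃ u ∈ unitary A, ψ = φ.comp (AdL u)

def IsPmTuple {m : ℕ} (φ : Fin m → (A →L[ℂ] ℂ)) : Prop :=
  (∀ i, IsPureState (φ i)) ∧ ∀ i j, i ≠ j → ¬ UEquiv (φ i) (φ j)

def BallP {m : ℕ} (φ : Fin m → (A →L[ℂ] ℂ)) (G : Finset A) (δ : ℝ) :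
    Set (Fin m → (A →L[ℂ] ℂ)) :=
  {ψ | IsPmTuple ψ ∧ ∀ b ∈ G, ∀ i, ‖φ i b - ψ i b‖ < δ}

def InWeakClosure {m : ℕ} (S : Set (Fin m → (A →L[ℂ] ℂ)))
    (ψ : Fin m → (A →L[ℂ] ℂ)) : Prop :=
  ∀ (G : Finset A) (δ : ℝ), 0 < δ →
    ∃ χ ∈ S, ∀ b ∈ G, ∀ i, ‖ψ i b - χ i b‖ < δ

def AdOrbit {m : ℕ} (φ : Fin m → (A →L[ℂ] ℂ)) (F : Finset A) (ε : ℝ) :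
    Set (Fin m → (A →L[ℂ] ℂ)) :=
  {ψ | ∃ u ∈ unitary A, (∀ b ∈ F, ‖u * b - b * u‖ < ε) ∧
    ψ = fun i => (φ i).comp (AdL u)}

def IsSimpleCStar (A : Type*) [NormedRing A] [StarRing A] [CStarRing A]
    [NormedAlgebra ℂ A] [StarModule ℂ A] [CompleteSpace A] : Prop :=
  ∀ I : TwoSidedIdeal A, IsClosed (I : Set A) → I = ⊥ ∨ I = ⊤

def IsGoodPair {m : ℕ} (φ : Fin m → (A →L[ℂ] ℂ)) (F : Finset A) (ε : ℝ)
    (G : Finset A) (δ : ℝ) : Prop :=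
  0 < δ ∧ ∀ l : ℕ, 1 ≤ l → ∀ ρ : Fin l → (A →L[ℂ] ℂ), IsPmTuple ρ →
    IsPmTuple (Fin.append φ ρ) →
    ∃ ρ' : Fin l → (A →L[ℂ] ℂ), IsPmTuple ρ' ∧ (∀ i, UEquiv (ρ i) (ρ' i)) ∧
      ∀ χ ∈ BallP (Fin.append φ ρ') G δ,
        InWeakClosure (AdOrbit (Fin.append φ ρ') F ε) χ
/-- A norm-dense `ℚ + iℚ`-subalgebra of `A`, closed under adjoints, whose unitaries are
norm-dense in the unitary group of `A`. -/
structure IsQiQSubalgebra (A₀ : Set A) : Prop where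
  dense : Dense A₀
  add_mem : ∀ {a b : A}, a ∈ A₀ → b ∈ A₀ → a + b ∈ A₀
  mul_mem : ∀ {a b : A}, a ∈ A₀ → b ∈ A₀ → a * b ∈ A₀
  smul_mem : ∀ (s t : ℚ) {a : A}, a ∈ A₀ → (((s : ℂ) + (t : ℂ) * Complex.I) • a) ∈ A₀
  star_mem : ∀ {a : A}, a ∈ A₀ → star a ∈ A₀
  unitary_dense : ∀ u ∈ unitary A, ∀ ε : ℝ, 0 < ε →
    ∃ v, v ∈ A₀ ∧ v ∈ unitary A ∧ ‖v - u‖ < ε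

/-- The raw data of a condition in the forcing notion `E_{A°}(φ̄, ψ̄)`. -/
structure Cond (A : Type*) where
  F : Finset A
  G : Finset A
  ε : ℝ
  δ : ℝ
  v : A
  w : A

/-- Membership in the forcing notion `E_{A°}(φ̄, ψ̄)`. -/
def IsCond {m : ℕ} (A₀ : Set A) (φ ψ : Fin m → (A →L[ℂ] ℂ)) (q : Cond A) : Prop :=
  letI := Classical.decEq A
  (↑q.F ⊆ A₀) ∧ (↑q.G ⊆ A₀) ∧ 0 < q.ε ∧ 0 < q.δ ∧
  (q.v ∈ unitary A ∧ q.v ∈ A₀) ∧ (q.w ∈ unitary A ∧ q.w ∈ A₀) ∧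
  IsGoodPair (fun i => (φ i).comp (AdL q.v))
    (q.F ∪ q.F.image fun b => star q.v * b * q.v) (q.ε / 3) q.G q.δ ∧
  (fun i => (ψ i).comp (AdL q.w)) ∈ BallP (fun i => (φ i).comp (AdL q.v)) q.G q.δ

/-- The order on `E_{A°}(φ̄, ψ̄)`: `p ≤ q` (`p` extends `q`). -/
def CondLE (p q : Cond A) : Prop :=
  q.F ⊆ p.F ∧ q.G ⊆ p.G ∧ p.ε ≤ q.ε ∧ p.δ ≤ q.δ ∧
  ∀ b ∈ q.F,
    (max ‖p.v * b * star p.v - q.v * b * star q.v‖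
         ‖star p.v * b * p.v - star q.v * b * q.v‖ ≤ q.ε - p.ε) ∧
    (max ‖p.w * b * star p.w - q.w * b * star q.w‖
         ‖star p.w * b * p.w - star q.w * b * q.w‖ ≤ q.ε - p.ε)

/-- Limit along a filter `𝔊` of conditions. -/
def GLim (𝔊 : Set (Cond A)) (f : Cond A → A) (L : A) : Prop :=
  ∀ ε : ℝ, 0 < ε → ∃ p ∈ 𝔊, ∀ q ∈ 𝔊, CondLE q p → ‖f q - L‖ < ε

/-- A filter on the forcing notion `E_{A°}(φ̄, ψ̄)`. -/
def IsFilterOn {m : ℕ} (A₀ : Set A) (φ ψ : Fin m → (A →L[ℂ] ℂ))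
    (𝔊 : Set (Cond A)) : Prop :=
  (∀ p ∈ 𝔊, IsCond A₀ φ ψ p) ∧
  (∀ p ∈ 𝔊, ∀ q : Cond A, IsCond A₀ φ ψ q → CondLE p q → q ∈ 𝔊) ∧
  (∀ p ∈ 𝔊, ∀ q ∈ 𝔊, ∃ r ∈ 𝔊, CondLE r p ∧ CondLE r q)

/-- An approximately inner map. -/
def ApproxInner (Φ : A → A) : Prop :=
  ∀ (F : Finset A) (ε : ℝ), 0 < ε →
    ∃ u ∈ unitary A, ∀ a ∈ F, ‖Φ a - u * a * star u‖ < ε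
namespace Statement4Aux

lemma condLE_refl (p : Cond A) : CondLE p p :=
  ⟨subset_rfl, subset_rfl, le_rfl, le_rfl, fun b _ => by simp⟩

lemma condLE_trans {p q r : Cond A} (h1 : CondLE p q) (h2 : CondLE q r) : CondLE p r := by
  obtain ⟨hF1, hG1, hε1, hδ1, hn1⟩ := h1
  obtain ⟨hF2, hG2, hε2, hδ2, hn2⟩ := h2
  refine ⟨hF2.trans hF1, hG2.trans hG1, hε1.trans hε2, hδ1.trans hδ2, fun b hb => ?_⟩
  obtain ⟨hv1, hw1⟩ := hn1 b (hF2 hb)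
  obtain ⟨hv2, hw2⟩ := hn2 b hb
  constructor
  · refine max_le ?_ ?_
    · calc ‖p.v * b * star p.v - r.v * b * star r.v‖
          ≤ ‖p.v * b * star p.v - q.v * b * star q.v‖
            + ‖q.v * b * star q.v - r.v * b * star r.v‖ := by
            simpa using norm_sub_le_norm_sub_add_norm_sub _ (q.v * b * star q.v) _
        _ ≤ (q.ε - p.ε) + (r.ε - q.ε) := by
            gcongr <;> [exact le_trans (le_max_left _ _) hv1; exact le_trans (le_max_left _ _) hv2]
        _ = r.ε - p.ε := by abel
    · calc ‖star p.v * b * p.v - star r.v * b * r.v‖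
          ≤ ‖star p.v * b * p.v - star q.v * b * q.v‖
            + ‖star q.v * b * q.v - star r.v * b * r.v‖ := by
            simpa using norm_sub_le_norm_sub_add_norm_sub _ (star q.v * b * q.v) _
        _ ≤ (q.ε - p.ε) + (r.ε - q.ε) := by
            gcongr <;> [exact le_trans (le_max_right _ _) hv1; exact le_trans (le_max_right _ _) hv2]
        _ = r.ε - p.ε := by abel
  · refine max_le ?_ ?_
    · calc ‖p.w * b * star p.w - r.w * b * star r.w‖
          ≤ ‖p.w * b * star p.w - q.w * b * star q.w‖
            + ‖q.w * b * star q.w - r.w * b * star r.w‖ := by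
            simpa using norm_sub_le_norm_sub_add_norm_sub _ (q.w * b * star q.w) _
        _ ≤ (q.ε - p.ε) + (r.ε - q.ε) := by
            gcongr <;> [exact le_trans (le_max_left _ _) hw1; exact le_trans (le_max_left _ _) hw2]
        _ = r.ε - p.ε := by abel
    · calc ‖star p.w * b * p.w - star r.w * b * r.w‖
          ≤ ‖star p.w * b * p.w - star q.w * b * q.w‖
            + ‖star q.w * b * q.w - star r.w * b * r.w‖ := by
            simpa using norm_sub_le_norm_sub_add_norm_sub _ (star q.w * b * q.w) _
        _ ≤ (q.ε - p.ε) + (r.ε - q.ε) := by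
            gcongr <;> [exact le_trans (le_max_right _ _) hw1; exact le_trans (le_max_right _ _) hw2]
        _ = r.ε - p.ε := by abel

lemma norm_conj_eq {u : A} (hu : u ∈ unitary A) (a : A) : ‖u * a * star u‖ = ‖a‖ := by
  calc ‖u * a * star u‖ = ‖(⟨u, hu⟩ : unitary A) * (a * star u)‖ := by rw [mul_assoc]
  _ = ‖a * star u‖ := CStarRing.norm_coe_unitary_mul _ _
  _ = ‖a * ((star (⟨u, hu⟩ : unitary A) : unitary A) : A)‖ := rfl
  _ = ‖a‖ := CStarRing.norm_mul_coe_unitary _ _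

lemma norm_conj_sub {u : A} (hu : u ∈ unitary A) (a b : A) :
    ‖u * a * star u - u * b * star u‖ = ‖a - b‖ := by
  rw [show u * a * star u - u * b * star u = u * (a - b) * star u by noncomm_ring,
    norm_conj_eq hu]

lemma norm_conj_sub' {u : A} (hu : u ∈ unitary A) (a b : A) :
    ‖star u * a * u - star u * b * u‖ = ‖a - b‖ := by
  have := norm_conj_sub (Unitary.star_mem hu) a b
  simpa [star_star] using this

/-- The basic hypotheses on the map `u : Cond A → A` used to build an automorphism. -/
def UGood (𝔊 : Set (Cond A)) (u : Cond A → A) : Prop :=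
  (∀ p ∈ 𝔊, u p ∈ unitary A) ∧
  ∀ p ∈ 𝔊, ∀ q ∈ 𝔊, CondLE q p → ∀ b ∈ p.F,
    ‖u q * b * star (u q) - u p * b * star (u p)‖ ≤ p.ε - q.ε

section Lims

variable (𝔊 : Set (Cond A))

lemma glim_congr {f g : Cond A → A} {L : A} (h : ∀ p ∈ 𝔊, f p = g p)
    (hf : GLim 𝔊 f L) : GLim 𝔊 g L := by
  intro ε hε
  obtain ⟨p, hp, h2⟩ := hf ε hε
  exact ⟨p, hp, fun q hq hqp => by rw [← h q hq]; exact h2 q hq hqp⟩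

variable (hdir : ∀ p ∈ 𝔊, ∀ q ∈ 𝔊, ∃ r ∈ 𝔊, CondLE r p ∧ CondLE r q)

include hdir

lemma glim_unique {f : Cond A → A} {L M : A} (hL : GLim 𝔊 f L) (hM : GLim 𝔊 f M) :
    L = M := by
  by_contra h
  have hd : 0 < ‖L - M‖ := by
    simpa [sub_eq_zero] using h
  obtain ⟨p, hp, hp2⟩ := hL (‖L - M‖ / 2) (by positivity)
  obtain ⟨q, hq, hq2⟩ := hM (‖L - M‖ / 2) (by positivity)
  obtain ⟨r, hr, hr1, hr2⟩ := hdir p hp q hq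
  have h1 := hp2 r hr hr1
  have h2 := hq2 r hr hr2
  have h3 : ‖L - M‖ ≤ ‖L - f r‖ + ‖f r - M‖ := norm_sub_le_norm_sub_add_norm_sub _ _ _
  rw [norm_sub_rev] at h1
  linarith

lemma glim_of_cauchy (f : Cond A → A)
    (key : ∀ ε : ℝ, 0 < ε → ∃ p ∈ 𝔊, ∀ q ∈ 𝔊, CondLE q p → ‖f q - f p‖ < ε) :
    ∃ L, GLim 𝔊 f L := by
  have hpos : ∀ n : ℕ, (0 : ℝ) < 1 / (n + 1) := fun n => by positivity
  choose P hP hP2 using fun n : ℕ => key (1 / (n + 1)) (hpos n)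
  set x : ℕ → A := fun n => f (P n) with hx
  have hkey : ∀ n m : ℕ, ‖x n - x m‖ < 1 / (n + 1) + 1 / (m + 1) := by
    intro n m
    obtain ⟨r, hr, hr1, hr2⟩ := hdir (P n) (hP n) (P m) (hP m)
    have h1 := hP2 n r hr hr1
    have h2 := hP2 m r hr hr2
    have h3 : ‖x n - x m‖ ≤ ‖x n - f r‖ + ‖f r - x m‖ := norm_sub_le_norm_sub_add_norm_sub _ _ _
    rw [norm_sub_rev] at h1
    linarith
  have hxc : CauchySeq x := by
    rw [Metric.cauchySeq_iff']
    intro ε hε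
    obtain ⟨N, hN⟩ := exists_nat_gt (2 / ε)
    refine ⟨N, fun n hn => ?_⟩
    have h1 : ‖x n - x N‖ < 1 / (n + 1) + 1 / (N + 1) := hkey n N
    have h2 : 1 / ((n : ℝ) + 1) ≤ 1 / (N + 1) := by
      apply one_div_le_one_div_of_le (by positivity)
      exact_mod_cast Nat.succ_le_succ hn
    have h3 : 2 / ε < (N : ℝ) + 1 := lt_of_lt_of_le hN (by linarith)
    have h4 : 1 / ((N : ℝ) + 1) < ε / 2 := by
      rw [div_lt_iff₀ (by positivity)]
      rw [div_lt_iff₀ hε] at h3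
      nlinarith
    rw [dist_eq_norm]
    linarith
  obtain ⟨L, hL⟩ := cauchySeq_tendsto_of_complete hxc
  refine ⟨L, ?_⟩
  intro ε hε
  obtain ⟨N, hN⟩ := exists_nat_gt (3 / ε)
  have hN1 : 3 / ε < (N : ℝ) + 1 := lt_of_lt_of_le hN (by linarith)
  have hN2 : 3 / ((N : ℝ) + 1) < ε := by
    rw [div_lt_iff₀ (by positivity)]
    rw [div_lt_iff₀ hε] at hN1
    nlinarith
  have hxNL : ‖x N - L‖ ≤ 2 / (N + 1) := by
    have ht : Filter.Tendsto (fun m => ‖x N - x m‖) Filter.atTop (nhds ‖x N - L‖) :=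
      (Filter.Tendsto.sub tendsto_const_nhds hL).norm
    refine le_of_tendsto ht ?_
    filter_upwards [Filter.eventually_ge_atTop N] with m hm
    have h1 := hkey N m
    have h2 : 1 / ((m : ℝ) + 1) ≤ 1 / (N + 1) := by
      apply one_div_le_one_div_of_le (by positivity)
      exact_mod_cast Nat.succ_le_succ hm
    have : 2 / ((N : ℝ) + 1) = 1 / (N + 1) + 1 / (N + 1) := by ring
    rw [this]
    linarith
  refine ⟨P N, hP N, fun q hq hqP => ?_⟩
  have h1 : ‖f q - x N‖ < 1 / (N + 1) := hP2 N q hq hqP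
  have h3 : ‖f q - L‖ ≤ ‖f q - x N‖ + ‖x N - L‖ := norm_sub_le_norm_sub_add_norm_sub _ _ _
  have : 3 / ((N : ℝ) + 1) = 1 / (N + 1) + 2 / (N + 1) := by ring
  linarith

lemma glim_add {f g : Cond A → A} {L M : A} (hf : GLim 𝔊 f L) (hg : GLim 𝔊 g M) :
    GLim 𝔊 (fun p => f p + g p) (L + M) := by
  intro ε hε
  obtain ⟨p1, hp1, h1⟩ := hf (ε / 2) (by positivity)
  obtain ⟨p2, hp2, h2⟩ := hg (ε / 2) (by positivity)
  obtain ⟨r, hr, hr1, hr2⟩ := hdir p1 hp1 p2 hp2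
  refine ⟨r, hr, fun q hq hqr => ?_⟩
  have e1 := h1 q hq (condLE_trans hqr hr1)
  have e2 := h2 q hq (condLE_trans hqr hr2)
  calc ‖f q + g q - (L + M)‖ = ‖(f q - L) + (g q - M)‖ := congrArg norm (by abel)
  _ ≤ ‖f q - L‖ + ‖g q - M‖ := norm_add_le _ _
  _ < ε := by linarith

lemma glim_mul {f g : Cond A → A} {L M : A} (C : ℝ) (hC0 : 0 ≤ C)
    (hC : ∀ p ∈ 𝔊, ‖f p‖ ≤ C) (hf : GLim 𝔊 f L) (hg : GLim 𝔊 g M) :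
    GLim 𝔊 (fun p => f p * g p) (L * M) := by
  intro ε hε
  obtain ⟨p1, hp1, h1⟩ := hf (ε / (2 * (‖M‖ + 1))) (by positivity)
  obtain ⟨p2, hp2, h2⟩ := hg (ε / (2 * (C + 1))) (by positivity)
  obtain ⟨r, hr, hr1, hr2⟩ := hdir p1 hp1 p2 hp2
  refine ⟨r, hr, fun q hq hqr => ?_⟩
  have e1 := h1 q hq (condLE_trans hqr hr1)
  have e2 := h2 q hq (condLE_trans hqr hr2)
  have hfq := hC q hq
  calc ‖f q * g q - L * M‖ = ‖f q * (g q - M) + (f q - L) * M‖ := congrArg norm (by noncomm_ring)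
  _ ≤ ‖f q * (g q - M)‖ + ‖(f q - L) * M‖ := norm_add_le _ _
  _ ≤ ‖f q‖ * ‖g q - M‖ + ‖f q - L‖ * ‖M‖ := by gcongr <;> exact norm_mul_le _ _
  _ ≤ C * (ε / (2 * (C + 1))) + (ε / (2 * (‖M‖ + 1))) * ‖M‖ :=
      add_le_add (mul_le_mul hfq e2.le (norm_nonneg _) hC0)
        (mul_le_mul_of_nonneg_right e1.le (norm_nonneg M))
  _ < ε := by
      have hM : (0 : ℝ) ≤ ‖M‖ := norm_nonneg _
      have k1 : C * (ε / (2 * (C + 1))) < ε / 2 := by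
        rw [mul_div_assoc', div_lt_div_iff₀ (by positivity) (by norm_num)]
        nlinarith
      have k2 : (ε / (2 * (‖M‖ + 1))) * ‖M‖ < ε / 2 := by
        rw [div_mul_eq_mul_div, div_lt_div_iff₀ (by positivity) (by norm_num)]
        nlinarith
      linarith

lemma exists_common {ι : Type*} (hne : 𝔊.Nonempty) (S : Finset ι) (p : ι → Cond A)
    (hp : ∀ j ∈ S, p j ∈ 𝔊) : ∃ r ∈ 𝔊, ∀ j ∈ S, CondLE r (p j) := by
  classical
  induction S using Finset.induction_on with
  | empty =>
    obtain ⟨r, hr⟩ := hne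
    exact ⟨r, hr, by simp⟩
  | @insert j S hj ih =>
    obtain ⟨r, hr, hr2⟩ := ih (fun i hi => hp i (Finset.mem_insert_of_mem hi))
    obtain ⟨r', hr', hr'1, hr'2⟩ := hdir r hr (p j) (hp j (Finset.mem_insert_self j S))
    refine ⟨r', hr', fun i hi => ?_⟩
    rcases Finset.mem_insert.mp hi with h | h
    · subst h; exact hr'2
    · exact condLE_trans hr'1 (hr2 i h)

end Lims

lemma glim_smul (𝔊 : Set (Cond A)) {f : Cond A → A} {L : A} (c : ℂ)
    (hf : GLim 𝔊 f L) : GLim 𝔊 (fun p => c • f p) (c • L) := by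
  intro ε hε
  obtain ⟨p, hp, h⟩ := hf (ε / (‖c‖ + 1)) (by positivity)
  refine ⟨p, hp, fun q hq hqp => ?_⟩
  have e := h q hq hqp
  calc ‖c • f q - c • L‖ = ‖c • (f q - L)‖ := by rw [smul_sub]
  _ = ‖c‖ * ‖f q - L‖ := norm_smul _ _
  _ ≤ ‖c‖ * (ε / (‖c‖ + 1)) := mul_le_mul_of_nonneg_left e.le (norm_nonneg c)
  _ < ε := by
      have hc : (0:ℝ) ≤ ‖c‖ := norm_nonneg _
      rw [mul_div_assoc', div_lt_iff₀ (by positivity)]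
      nlinarith

lemma glim_star (𝔊 : Set (Cond A)) {f : Cond A → A} {L : A}
    (hf : GLim 𝔊 f L) : GLim 𝔊 (fun p => star (f p)) (star L) := by
  intro ε hε
  obtain ⟨p, hp, h⟩ := hf ε hε
  refine ⟨p, hp, fun q hq hqp => ?_⟩
  have e := h q hq hqp
  calc ‖star (f q) - star L‖ = ‖star (f q - L)‖ := by rw [star_sub]
  _ = ‖f q - L‖ := norm_star _
  _ < ε := e

lemma glim_exists (𝔊 : Set (Cond A)) (A₀ : Set A) (hdense : Dense A₀)
    (hdir : ∀ p ∈ 𝔊, ∀ q ∈ 𝔊, ∃ r ∈ 𝔊, CondLE r p ∧ CondLE r q)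
    (hεpos : ∀ p ∈ 𝔊, 0 < p.ε)
    (hg : ∀ F : Finset A, ↑F ⊆ A₀ → ∀ ε : ℝ, 0 < ε → ∃ p ∈ 𝔊, F ⊆ p.F ∧ p.ε ≤ ε)
    (u : Cond A → A) (hu : UGood 𝔊 u) (a : A) :
    ∃ L, GLim 𝔊 (fun p => u p * a * star (u p)) L := by
  apply glim_of_cauchy 𝔊 hdir
  intro ε hε
  obtain ⟨a', ha'0, ha'⟩ : ∃ y ∈ A₀, ‖a - y‖ < ε / 4 := by
    obtain ⟨y, hy1, hy2⟩ := hdense.exists_dist_lt a (show (0:ℝ) < ε / 4 by positivity)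
    exact ⟨y, hy1, by rwa [← dist_eq_norm]⟩
  obtain ⟨p, hp, hpF, hpε⟩ := hg {a'} (by simpa using ha'0) (ε / 4) (by positivity)
  refine ⟨p, hp, fun q hq hqp => ?_⟩
  have ha'F : a' ∈ p.F := hpF (Finset.mem_singleton_self a')
  have h1 : ‖u q * a' * star (u q) - u p * a' * star (u p)‖ ≤ p.ε - q.ε :=
    hu.2 p hp q hq hqp a' ha'F
  have h2 : p.ε - q.ε ≤ ε / 4 := by
    have := hεpos q hq
    linarith
  have h3 : ‖u q * a * star (u q) - u q * a' * star (u q)‖ = ‖a - a'‖ :=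
    norm_conj_sub (hu.1 q hq) a a'
  have h4 : ‖u p * a' * star (u p) - u p * a * star (u p)‖ = ‖a' - a‖ :=
    norm_conj_sub (hu.1 p hp) a' a
  have h5 : ‖a' - a‖ = ‖a - a'‖ := norm_sub_rev _ _
  calc ‖u q * a * star (u q) - u p * a * star (u p)‖
      ≤ ‖u q * a * star (u q) - u q * a' * star (u q)‖
        + ‖u q * a' * star (u q) - u p * a' * star (u p)‖
        + ‖u p * a' * star (u p) - u p * a * star (u p)‖ := by
        have t1 : u q * a * star (u q) - u p * a * star (u p) =
            (u q * a * star (u q) - u q * a' * star (u q))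
            + (u q * a' * star (u q) - u p * a' * star (u p))
            + (u p * a' * star (u p) - u p * a * star (u p)) := by abel
        rw [t1]
        exact norm_add₃_le
  _ < ε := by rw [h3, h4, h5]; linarith

/-- Builds a star-algebra automorphism from a `UGood` family of unitaries. -/
lemma build (𝔊 : Set (Cond A)) (A₀ : Set A) (hdense : Dense A₀)
    (hdir : ∀ p ∈ 𝔊, ∀ q ∈ 𝔊, ∃ r ∈ 𝔊, CondLE r p ∧ CondLE r q)
    (hεpos : ∀ p ∈ 𝔊, 0 < p.ε)
    (hg : ∀ F : Finset A, ↑F ⊆ A₀ → ∀ ε : ℝ, 0 < ε → ∃ p ∈ 𝔊, F ⊆ p.F ∧ p.ε ≤ ε)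
    (u : Cond A → A) (hu : UGood 𝔊 u) (hu' : UGood 𝔊 (fun p => star (u p))) :
    ∃ Φ : A ≃⋆ₐ[ℂ] A, (∀ a, GLim 𝔊 (fun p => u p * a * star (u p)) (Φ a)) ∧
      (∀ a, GLim 𝔊 (fun p => star (u p) * a * u p) (Φ.symm a)) := by
  choose Φf hΦ using glim_exists 𝔊 A₀ hdense hdir hεpos hg u hu
  choose Ψf hΨ0 using glim_exists 𝔊 A₀ hdense hdir hεpos hg (fun p => star (u p)) hu'
  have hΨ : ∀ a, GLim 𝔊 (fun p => star (u p) * a * u p) (Ψf a) := by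
    intro a
    refine glim_congr 𝔊 (fun p _ => ?_) (hΨ0 a)
    rw [star_star]
  have huu : ∀ p ∈ 𝔊, star (u p) * u p = 1 := fun p hp => (Unitary.mem_iff.mp (hu.1 p hp)).1
  have huu' : ∀ p ∈ 𝔊, u p * star (u p) = 1 := fun p hp => (Unitary.mem_iff.mp (hu.1 p hp)).2
  -- additivity
  have madd : ∀ a b, Φf (a + b) = Φf a + Φf b := by
    intro a b
    refine glim_unique 𝔊 hdir (hΦ (a + b)) ?_
    apply glim_congr 𝔊 (f := fun p => u p * a * star (u p) + u p * b * star (u p))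
      (fun p _ => by noncomm_ring)
    exact glim_add 𝔊 hdir (hΦ a) (hΦ b)
  -- multiplicativity
  have mmul : ∀ a b, Φf (a * b) = Φf a * Φf b := by
    intro a b
    refine glim_unique 𝔊 hdir (hΦ (a * b)) ?_
    apply glim_congr 𝔊 (f := fun p => (u p * a * star (u p)) * (u p * b * star (u p)))
      (fun p hp => ?_)
    · exact glim_mul 𝔊 hdir ‖a‖ (norm_nonneg a)
        (fun p hp => (norm_conj_eq (hu.1 p hp) a).le) (hΦ a) (hΦ b)
    · show (u p * a * star (u p)) * (u p * b * star (u p)) = u p * (a * b) * star (u p)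
      rw [show (u p * a * star (u p)) * (u p * b * star (u p))
          = u p * a * (star (u p) * u p) * b * star (u p) by noncomm_ring,
        huu p hp, mul_one]
      noncomm_ring
  -- smul
  have msmul : ∀ (c : ℂ) (a : A), Φf (c • a) = c • Φf a := by
    intro c a
    refine glim_unique 𝔊 hdir (hΦ (c • a)) ?_
    apply glim_congr 𝔊 (f := fun p => c • (u p * a * star (u p)))
      (fun p _ => by rw [mul_smul_comm, smul_mul_assoc])
    exact glim_smul 𝔊 c (hΦ a)
  -- star
  have mstar : ∀ a, Φf (star a) = star (Φf a) := by
    intro a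
    refine glim_unique 𝔊 hdir (hΦ (star a)) ?_
    apply glim_congr 𝔊 (f := fun p => star (u p * a * star (u p)))
      (fun p _ => by simp [star_mul, star_star, mul_assoc])
    exact glim_star 𝔊 (hΦ a)
  -- inverses
  have norm_small : ∀ x : A, (∀ ε : ℝ, 0 < ε → ‖x‖ < ε) → x = 0 := by
    intro x hx
    by_contra h
    have : (0:ℝ) < ‖x‖ := norm_pos_iff.mpr h
    exact lt_irrefl _ (hx ‖x‖ this)
  have linv : ∀ a, Ψf (Φf a) = a := by
    intro a
    rw [← sub_eq_zero]
    apply norm_small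
    intro ε hε
    obtain ⟨p1, hp1, h1⟩ := hΨ (Φf a) (ε / 2) (by positivity)
    obtain ⟨p2, hp2, h2⟩ := hΦ a (ε / 2) (by positivity)
    obtain ⟨r, hr, hr1, hr2⟩ := hdir p1 hp1 p2 hp2
    have e1 := h1 r hr hr1
    have e2 := h2 r hr hr2
    have key : star (u r) * (u r * a * star (u r)) * u r = a := by
      rw [show star (u r) * (u r * a * star (u r)) * u r
          = (star (u r) * u r) * a * (star (u r) * u r) by noncomm_ring,
        huu r hr, one_mul, mul_one]
    have e3 : ‖star (u r) * (Φf a) * u r - a‖ < ε / 2 := by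
      calc ‖star (u r) * (Φf a) * u r - a‖
          = ‖star (u r) * (Φf a) * u r - star (u r) * (u r * a * star (u r)) * u r‖ := by
            rw [key]
      _ = ‖Φf a - u r * a * star (u r)‖ := norm_conj_sub' (hu.1 r hr) _ _
      _ < ε / 2 := by rw [norm_sub_rev]; exact e2
    calc ‖Ψf (Φf a) - a‖
        ≤ ‖Ψf (Φf a) - star (u r) * (Φf a) * u r‖ + ‖star (u r) * (Φf a) * u r - a‖ := by
          rw [show Ψf (Φf a) - a = -(star (u r) * (Φf a) * u r - Ψf (Φf a))
            + (star (u r) * (Φf a) * u r - a) by abel]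
          refine le_trans (norm_add_le _ _) ?_
          rw [norm_neg, norm_sub_rev]
    _ < ε := by rw [norm_sub_rev] at e1; linarith
  have rinv : ∀ a, Φf (Ψf a) = a := by
    intro a
    rw [← sub_eq_zero]
    apply norm_small
    intro ε hε
    obtain ⟨p1, hp1, h1⟩ := hΦ (Ψf a) (ε / 2) (by positivity)
    obtain ⟨p2, hp2, h2⟩ := hΨ a (ε / 2) (by positivity)
    obtain ⟨r, hr, hr1, hr2⟩ := hdir p1 hp1 p2 hp2
    have e1 := h1 r hr hr1
    have e2 := h2 r hr hr2
    have key : u r * (star (u r) * a * u r) * star (u r) = a := by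
      rw [show u r * (star (u r) * a * u r) * star (u r)
          = (u r * star (u r)) * a * (u r * star (u r)) by noncomm_ring,
        huu' r hr, one_mul, mul_one]
    have e3 : ‖u r * (Ψf a) * star (u r) - a‖ < ε / 2 := by
      calc ‖u r * (Ψf a) * star (u r) - a‖
          = ‖u r * (Ψf a) * star (u r) - u r * (star (u r) * a * u r) * star (u r)‖ := by
            rw [key]
      _ = ‖Ψf a - star (u r) * a * u r‖ := norm_conj_sub (hu.1 r hr) _ _
      _ < ε / 2 := by rw [norm_sub_rev]; exact e2
    calc ‖Φf (Ψf a) - a‖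
        ≤ ‖Φf (Ψf a) - u r * (Ψf a) * star (u r)‖ + ‖u r * (Ψf a) * star (u r) - a‖ := by
          rw [show Φf (Ψf a) - a = -(u r * (Ψf a) * star (u r) - Φf (Ψf a))
            + (u r * (Ψf a) * star (u r) - a) by abel]
          refine le_trans (norm_add_le _ _) ?_
          rw [norm_neg, norm_sub_rev]
    _ < ε := by rw [norm_sub_rev] at e1; linarith
  refine ⟨{ toFun := Φf, invFun := Ψf, left_inv := linv, right_inv := rinv,
            map_mul' := mmul, map_add' := madd,
            map_star' := mstar, map_smul' := msmul }, hΦ, fun a => hΨ a⟩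

end Statement4Aux

open Statement4Aux in
/-- Theorem 3.5(1): a sufficiently generic filter `𝔊` on `E_{A°}(φ̄, ψ̄)` yields
norm limits `Φ_L(a) = lim_{p ∈ 𝔊} v_p a v_p*`, `Φ_R(a) = lim_{p ∈ 𝔊} w_p a w_p*`
which are *-automorphisms of `A` (with the indicated inverses), such that
`Φ_𝔊 := Φ_L ∘ Φ_R⁻¹` is approximately inner and `φ_i ∘ Φ_𝔊 = ψ_i` for all `i < m`. -/
theorem statement4
    (hsimple : IsSimpleCStar A) (hinf : ¬ FiniteDimensional ℂ A)
    (A₀ : Set A) (hA₀ : IsQiQSubalgebra A₀)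
    {m : ℕ} (hm : 1 ≤ m) (φ ψ : Fin m → (A →L[ℂ] ℂ))
    (hφ : IsPmTuple φ) (hψ : IsPmTuple ψ)
    (𝔊 : Set (Cond A)) (hfil : IsFilterOn A₀ φ ψ 𝔊)
    (hgen : ∀ F G : Finset A, ↑F ⊆ A₀ → ↑G ⊆ A₀ → ∀ ε δ : ℝ, 0 < ε → 0 < δ →
      ∃ p ∈ 𝔊, F ⊆ p.F ∧ G ⊆ p.G ∧ p.ε ≤ ε ∧ p.δ ≤ δ) :
    ∃ ΦL ΦR : A ≃⋆ₐ[ℂ] A,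
      (∀ a : A, GLim 𝔊 (fun p => p.v * a * star p.v) (ΦL a)) ∧
      (∀ a : A, GLim 𝔊 (fun p => star p.v * a * p.v) (ΦL.symm a)) ∧
      (∀ a : A, GLim 𝔊 (fun p => p.w * a * star p.w) (ΦR a)) ∧
      (∀ a : A, GLim 𝔊 (fun p => star p.w * a * p.w) (ΦR.symm a)) ∧
      ApproxInner (fun a => ΦL (ΦR.symm a)) ∧
      (∀ (i : Fin m) (a : A), φ i (ΦL (ΦR.symm a)) = ψ i a) := by
  classical
  obtain ⟨hmem, hup, hdir⟩ := hfil
  have hdense : Dense A₀ := hA₀.dense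
  have hεpos : ∀ p ∈ 𝔊, 0 < p.ε := fun p hp => (hmem p hp).2.2.1
  have hg : ∀ F : Finset A, ↑F ⊆ A₀ → ∀ ε : ℝ, 0 < ε →
      ∃ p ∈ 𝔊, F ⊆ p.F ∧ p.ε ≤ ε := by
    intro F hF ε hε
    obtain ⟨p, hp, h1, _, h3, _⟩ := hgen F ∅ hF (by simp) ε 1 hε one_pos
    exact ⟨p, hp, h1, h3⟩
  have hne : 𝔊.Nonempty := by
    obtain ⟨p, hp, _⟩ := hg ∅ (by simp) 1 one_pos
    exact ⟨p, hp⟩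
  have hvu : ∀ p ∈ 𝔊, p.v ∈ unitary A := fun p hp => (hmem p hp).2.2.2.2.1.1
  have hwu : ∀ p ∈ 𝔊, p.w ∈ unitary A := fun p hp => (hmem p hp).2.2.2.2.2.1.1
  have huv : UGood 𝔊 (fun p => p.v) := by
    refine ⟨hvu, fun p hp q hq hqp b hb => ?_⟩
    exact le_trans (le_max_left _ _) (hqp.2.2.2.2 b hb).1
  have huv' : UGood 𝔊 (fun p => star p.v) := by
    refine ⟨fun p hp => Unitary.star_mem (hvu p hp), fun p hp q hq hqp b hb => ?_⟩
    have := le_trans (le_max_right _ _) (hqp.2.2.2.2 b hb).1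
    simpa [star_star] using this
  have huw : UGood 𝔊 (fun p => p.w) := by
    refine ⟨hwu, fun p hp q hq hqp b hb => ?_⟩
    exact le_trans (le_max_left _ _) (hqp.2.2.2.2 b hb).2
  have huw' : UGood 𝔊 (fun p => star p.w) := by
    refine ⟨fun p hp => Unitary.star_mem (hwu p hp), fun p hp q hq hqp b hb => ?_⟩
    have := le_trans (le_max_right _ _) (hqp.2.2.2.2 b hb).2
    simpa [star_star] using this
  obtain ⟨ΦL, hΦL, hΦLs⟩ := build 𝔊 A₀ hdense hdir hεpos hg (fun p => p.v) huv huv'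
  obtain ⟨ΦR, hΦR, hΦRs⟩ := build 𝔊 A₀ hdense hdir hεpos hg (fun p => p.w) huw huw'
  refine ⟨ΦL, ΦR, hΦL, hΦLs, hΦR, hΦRs, ?_, ?_⟩
  · -- approximately inner
    intro F ε hε
    have h3 : (0:ℝ) < ε / 3 := by positivity
    choose p1 hp1 hp1s using fun a : A => hΦL (ΦR.symm a) (ε / 3) h3
    choose p2 hp2 hp2s using fun a : A => hΦRs a (ε / 3) h3
    obtain ⟨r1, hr1, hr1s⟩ := exists_common 𝔊 hdir hne F p1 (fun a _ => hp1 a)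
    obtain ⟨r2, hr2, hr2s⟩ := exists_common 𝔊 hdir hne F p2 (fun a _ => hp2 a)
    obtain ⟨r, hr, hra, hrb⟩ := hdir r1 hr1 r2 hr2
    refine ⟨r.v * star r.w, mul_mem (hvu r hr) (Unitary.star_mem (hwu r hr)), ?_⟩
    intro a ha
    have e1 : ‖r.v * (ΦR.symm a) * star r.v - ΦL (ΦR.symm a)‖ < ε / 3 :=
      hp1s a r hr (condLE_trans hra (hr1s a ha))
    have e2 : ‖star r.w * a * r.w - ΦR.symm a‖ < ε / 3 :=
      hp2s a r hr (condLE_trans hrb (hr2s a ha))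
    have key : (r.v * star r.w) * a * star (r.v * star r.w)
        = r.v * (star r.w * a * r.w) * star r.v := by
      rw [star_mul, star_star]
      noncomm_ring
    rw [key]
    have e3 : ‖r.v * (ΦR.symm a) * star r.v - r.v * (star r.w * a * r.w) * star r.v‖
        = ‖ΦR.symm a - star r.w * a * r.w‖ := norm_conj_sub (hvu r hr) _ _
    calc ‖ΦL (ΦR.symm a) - r.v * (star r.w * a * r.w) * star r.v‖
        ≤ ‖ΦL (ΦR.symm a) - r.v * (ΦR.symm a) * star r.v‖
          + ‖r.v * (ΦR.symm a) * star r.v - r.v * (star r.w * a * r.w) * star r.v‖ := by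
          rw [show ΦL (ΦR.symm a) - r.v * (star r.w * a * r.w) * star r.v
            = (ΦL (ΦR.symm a) - r.v * (ΦR.symm a) * star r.v)
              + (r.v * (ΦR.symm a) * star r.v - r.v * (star r.w * a * r.w) * star r.v) by abel]
          exact norm_add_le _ _
    _ < ε := by
        rw [e3]
        rw [norm_sub_rev] at e1
        rw [norm_sub_rev] at e2
        linarith
  · -- the states match
    have claim : ∀ (i : Fin m) (b : A), φ i (ΦL b) = ψ i (ΦR b) := by
      intro i b
      rw [← sub_eq_zero]
      by_contra hc
      set d := φ i (ΦL b) - ψ i (ΦR b) with hd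
      have hd0 : (0:ℝ) < ‖d‖ := norm_pos_iff.mpr hc
      set ε := ‖d‖ with hεd
      set C : ℝ := max ‖φ i‖ (max ‖ψ i‖ 1) with hC
      have hC1 : (1:ℝ) ≤ C := le_trans (le_max_right _ _) (le_max_right _ _)
      have hC0 : (0:ℝ) < C := lt_of_lt_of_le one_pos hC1
      have hCφ : ‖φ i‖ ≤ C := le_max_left _ _
      have hCψ : ‖ψ i‖ ≤ C := le_trans (le_max_left _ _) (le_max_right _ _)
      have hsm : (0:ℝ) < ε / (5 * C) := by positivity
      obtain ⟨b', hb'0, hb'⟩ : ∃ y ∈ A₀, ‖b - y‖ < ε / (5 * C) := by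
        obtain ⟨y, hy1, hy2⟩ := hdense.exists_dist_lt b hsm
        exact ⟨y, hy1, by rwa [← dist_eq_norm]⟩
      obtain ⟨p, hp, _, hpG, _, hpδ⟩ :=
        hgen ∅ {b'} (by simp) (by simpa using hb'0) 1 (ε / 5) one_pos (by positivity)
      obtain ⟨p1, hp1, hp1s⟩ := hΦL b (ε / (5 * C)) hsm
      obtain ⟨p2, hp2, hp2s⟩ := hΦR b (ε / (5 * C)) hsm
      obtain ⟨r1, hr1, hr1a, hr1b⟩ := hdir p hp p1 hp1
      obtain ⟨r, hr, hra, hrb⟩ := hdir r1 hr1 p2 hp2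
      have hrp : CondLE r p := condLE_trans hra hr1a
      have hrp1 : CondLE r p1 := condLE_trans hra hr1b
      have e1 : ‖r.v * b * star r.v - ΦL b‖ < ε / (5 * C) := hp1s r hr hrp1
      have e2 : ‖r.w * b * star r.w - ΦR b‖ < ε / (5 * C) := hp2s r hr hrb
      have hball := (hmem r hr).2.2.2.2.2.2.2
      have hb'G : b' ∈ r.G := hrp.2.1 (hpG (Finset.mem_singleton_self b'))
      have e3 := hball.2 b' hb'G i
      have hAdv : AdL r.v b' = r.v * b' * star r.v := by
        simp [AdL, mul_assoc]
      have hAdw : AdL r.w b' = r.w * b' * star r.w := by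
        simp [AdL, mul_assoc]
      have e3' : ‖φ i (r.v * b' * star r.v) - ψ i (r.w * b' * star r.w)‖ < ε / 5 := by
        have : ‖(φ i).comp (AdL r.v) b' - (ψ i).comp (AdL r.w) b'‖ < r.δ := e3
        rw [ContinuousLinearMap.comp_apply, ContinuousLinearMap.comp_apply,
          hAdv, hAdw] at this
        exact lt_of_lt_of_le this (le_trans hrp.2.2.2.1 hpδ)
      -- five estimates
      have bound : ∀ (χ : A →L[ℂ] ℂ) (x y : A), ‖χ‖ ≤ C → ‖x - y‖ < ε / (5 * C) →
          ‖χ x - χ y‖ ≤ ε / 5 := by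
        intro χ x y hχ hxy
        calc ‖χ x - χ y‖ = ‖χ (x - y)‖ := by rw [map_sub]
        _ ≤ ‖χ‖ * ‖x - y‖ := χ.le_opNorm _
        _ ≤ C * (ε / (5 * C)) := by
            apply mul_le_mul hχ hxy.le (norm_nonneg _) hC0.le
        _ = ε / 5 := by field_simp
      have t1 : ‖φ i (ΦL b) - φ i (r.v * b * star r.v)‖ ≤ ε / 5 := by
        apply bound _ _ _ hCφ
        rwa [norm_sub_rev] at e1
      have t2 : ‖φ i (r.v * b * star r.v) - φ i (r.v * b' * star r.v)‖ ≤ ε / 5 := by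
        apply bound _ _ _ hCφ
        rw [norm_conj_sub (hvu r hr)]
        exact hb'
      have t4 : ‖ψ i (r.w * b' * star r.w) - ψ i (r.w * b * star r.w)‖ ≤ ε / 5 := by
        apply bound _ _ _ hCψ
        rw [norm_conj_sub (hwu r hr), norm_sub_rev]
        exact hb'
      have t5 : ‖ψ i (r.w * b * star r.w) - ψ i (ΦR b)‖ ≤ ε / 5 := by
        apply bound _ _ _ hCψ
        exact e2
      have total : ‖d‖ < ε := by
        calc ‖d‖ = ‖(φ i (ΦL b) - φ i (r.v * b * star r.v))
            + (φ i (r.v * b * star r.v) - φ i (r.v * b' * star r.v))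
            + (φ i (r.v * b' * star r.v) - ψ i (r.w * b' * star r.w))
            + (ψ i (r.w * b' * star r.w) - ψ i (r.w * b * star r.w))
            + (ψ i (r.w * b * star r.w) - ψ i (ΦR b))‖ := by rw [hd]; congr 1; ring
        _ ≤ ‖(φ i (ΦL b) - φ i (r.v * b * star r.v))
            + (φ i (r.v * b * star r.v) - φ i (r.v * b' * star r.v))
            + (φ i (r.v * b' * star r.v) - ψ i (r.w * b' * star r.w))
            + (ψ i (r.w * b' * star r.w) - ψ i (r.w * b * star r.w))‖
            + ‖ψ i (r.w * b * star r.w) - ψ i (ΦR b)‖ := norm_add_le _ _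
        _ ≤ ‖(φ i (ΦL b) - φ i (r.v * b * star r.v))
            + (φ i (r.v * b * star r.v) - φ i (r.v * b' * star r.v))
            + (φ i (r.v * b' * star r.v) - ψ i (r.w * b' * star r.w))‖
            + ‖ψ i (r.w * b' * star r.w) - ψ i (r.w * b * star r.w)‖
            + ‖ψ i (r.w * b * star r.w) - ψ i (ΦR b)‖ := by
            gcongr
            exact norm_add_le _ _
        _ ≤ ‖(φ i (ΦL b) - φ i (r.v * b * star r.v))
            + (φ i (r.v * b * star r.v) - φ i (r.v * b' * star r.v))‖
            + ‖φ i (r.v * b' * star r.v) - ψ i (r.w * b' * star r.w)‖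
            + ‖ψ i (r.w * b' * star r.w) - ψ i (r.w * b * star r.w)‖
            + ‖ψ i (r.w * b * star r.w) - ψ i (ΦR b)‖ := by
            gcongr
            exact norm_add_le _ _
        _ ≤ ‖φ i (ΦL b) - φ i (r.v * b * star r.v)‖
            + ‖φ i (r.v * b * star r.v) - φ i (r.v * b' * star r.v)‖
            + ‖φ i (r.v * b' * star r.v) - ψ i (r.w * b' * star r.w)‖
            + ‖ψ i (r.w * b' * star r.w) - ψ i (r.w * b * star r.w)‖
            + ‖ψ i (r.w * b * star r.w) - ψ i (ΦR b)‖ := by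
            gcongr
            exact norm_add_le _ _
        _ < ε := by
            have : ε / 5 + ε / 5 + ε / 5 + ε / 5 + ε / 5 = ε := by ring
            linarith [e3']
      exact lt_irrefl _ total
    intro i a
    rw [claim i (ΦR.symm a), ΦR.apply_symm_apply]

end
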